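/- Let λ1 ≥ λ0 and κ1 ≥ κ0 be infinite cardinals and ξ an ordinal. Suppose either λ0 = κ0^{+ξ}, or there is a cardinal λ ≤ λ0 such that λ0 = λ^{+ξ} and λ^{κ0} ≤ λ0. If (λ1,λ0) ↠_ξ (κ1,κ0), then (λ1,λ0) ↠_{κ0} (κ1,κ0). -/

import Mathlib

open Cardinal

universe u

/-- The `ξ`-th iterated cardinal successor `κ^{+ξ}`: `κ^{+0} = κ`,
`κ^{+(ξ+1)} = (κ^{+ξ})⁺`, and `κ^{+ξ} = sup_{η<ξ} κ^{+η}` for limit `ξ`. -/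
noncomputable def iterSucc (κ : Cardinal.{u}) (ξ : Ordinal.{u}) : Cardinal.{u} :=
  Ordinal.limitRecOn ξ κ (fun _ ih => Order.succ ih)
    (fun o _ ih => ⨆ η : Set.Iio o, ih η.1 η.2)

/-- `(λ1,λ0) ↠_ξ (κ1,κ0)`: identifying cardinals with their initial ordinals, for every
`f : λ1^{<ω} → λ1` there is `X ⊆ λ1` of cardinality `κ1` with `f''(X^{<ω}) ⊆ X`,
`|X ∩ λ0| = κ0`, and `ξ ⊆ X`. -/
def ChangXi (lam1 lam0 kap1 kap0 : Cardinal.{u}) (ξ : Ordinal.{u}) : Prop :=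
  ∀ f : List Ordinal.{u} → Ordinal.{u},
    (∀ l : List Ordinal.{u}, (∀ x ∈ l, x < lam1.ord) → f l < lam1.ord) →
    ∃ X : Set Ordinal.{u}, X ⊆ Set.Iio lam1.ord ∧
      #(↥X) = Cardinal.lift.{u + 1} kap1 ∧
      (∀ l : List Ordinal.{u}, (∀ x ∈ l, x ∈ X) → f l ∈ X) ∧
      #(↥(X ∩ Set.Iio lam0.ord)) = Cardinal.lift.{u + 1} kap0 ∧
      ∀ η : Ordinal.{u}, η < ξ → η ∈ X

namespace CXP
open Ordinal

inductive T : Type where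
  | var : ℕ → T
  | par : ℕ → T
  | nil : T
  | cons : T → T → T
  | app : ℕ → T → T

instance : Nonempty T := ⟨T.nil⟩

def enc : T → ℕ
  | .var n => Nat.pair 0 n
  | .par n => Nat.pair 1 n
  | .nil => Nat.pair 2 0
  | .cons a b => Nat.pair 3 (Nat.pair (enc a) (enc b))
  | .app c a => Nat.pair 4 (Nat.pair c (enc a))

theorem enc_inj : Function.Injective enc := by
  intro a
  induction a with
  | var n => intro b hb; cases b <;> simp [enc, Nat.pair_eq_pair] at hb <;> simp [hb]
  | par n => intro b hb; cases b <;> simp [enc, Nat.pair_eq_pair] at hb <;> simp [hb]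
  | nil => intro b hb; cases b <;> simp [enc, Nat.pair_eq_pair] at hb <;> simp [hb]
  | cons x y ihx ihy =>
      intro b hb; cases b <;> simp [enc, Nat.pair_eq_pair] at hb
      obtain ⟨h1, h2⟩ := hb; rw [ihx h1, ihy h2]
  | app c x ihx =>
      intro b hb; cases b <;> simp [enc, Nat.pair_eq_pair] at hb
      obtain ⟨h1, h2⟩ := hb; rw [h1, ihx h2]

instance : Countable T := ⟨⟨enc, enc_inj⟩⟩

noncomputable def dec : ℕ → T := Function.invFun enc

theorem dec_enc (t : T) : dec (enc t) = t := Function.leftInverse_invFun enc_inj t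

/-- max tag + 1 -/
def tb : T → ℕ
  | .var _ => 0
  | .par _ => 0
  | .nil => 0
  | .cons a b => max (tb a) (tb b)
  | .app c a => max (c+1) (tb a)

/-- var index bound -/
def vb : T → ℕ
  | .var n => n+1
  | .par _ => 0
  | .nil => 0
  | .cons a b => max (vb a) (vb b)
  | .app _ a => vb a

/-- par index bound -/
def pb : T → ℕ
  | .var _ => 0
  | .par n => n+1
  | .nil => 0
  | .cons a b => max (pb a) (pb b)
  | .app _ a => pb a

def ren (ρ σ : ℕ → ℕ) : T → T
  | .var n => .var (ρ n)
  | .par n => .par (σ n)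
  | .nil => .nil
  | .cons a b => .cons (ren ρ σ a) (ren ρ σ b)
  | .app c a => .app c (ren ρ σ a)

noncomputable def ev (g : List Ordinal.{u} → Ordinal.{u}) (xs gs : ℕ → Ordinal.{u}) :
    T → Ordinal.{u} × List Ordinal.{u}
  | .var n => (xs n, [])
  | .par n => (gs n, [])
  | .nil => (0, [])
  | .cons a b => (0, (ev g xs gs a).1 :: (ev g xs gs b).2)
  | .app c a => (g ((c : Ordinal.{u}) :: (ev g xs gs a).2), [])

theorem ev_ren (g : List Ordinal.{u} → Ordinal.{u}) (xs gs : ℕ → Ordinal.{u})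
    (ρ σ : ℕ → ℕ) (t : T) :
    ev g xs gs (ren ρ σ t) = ev g (xs ∘ ρ) (gs ∘ σ) t := by
  induction t <;> simp [ev, ren, *] <;> rfl

theorem ev_depend (g : List Ordinal.{u} → Ordinal.{u}) {xs xs' gs gs' : ℕ → Ordinal.{u}}
    (t : T) (hx : ∀ n < vb t, xs n = xs' n) (hp : ∀ n < pb t, gs n = gs' n) :
    ev g xs gs t = ev g xs' gs' t := by
  induction t with
  | var n => simp [ev, hx n (by simp [vb])]
  | par n => simp [ev, hp n (by simp [pb])]
  | nil => rfl
  | cons a b iha ihb =>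
      simp only [ev]
      rw [iha (fun n hn => hx n (lt_of_lt_of_le hn (by simp [vb])))
            (fun n hn => hp n (lt_of_lt_of_le hn (by simp [pb]))),
          ihb (fun n hn => hx n (lt_of_lt_of_le hn (by simp [vb])))
            (fun n hn => hp n (lt_of_lt_of_le hn (by simp [pb])))]
  | app c a iha =>
      simp only [ev]
      rw [iha (fun n hn => hx n (lt_of_lt_of_le hn (by simp [vb])))
            (fun n hn => hp n (lt_of_lt_of_le hn (by simp [pb])))]

theorem ev_congr {g g' : List Ordinal.{u} → Ordinal.{u}} {k : ℕ}
    (hg : ∀ (c : ℕ) (L : List Ordinal.{u}), c < k → g ((c : Ordinal.{u}) :: L) = g' ((c : Ordinal.{u}) :: L))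
    (xs gs : ℕ → Ordinal.{u}) {t : T} (ht : tb t ≤ k) :
    ev g xs gs t = ev g' xs gs t := by
  induction t with
  | var n => rfl
  | par n => rfl
  | nil => rfl
  | cons a b iha ihb =>
      simp only [ev]
      rw [iha (le_trans (by simp [tb]) ht), ihb (le_trans (by simp [tb]) ht)]
  | app c a iha =>
      simp only [ev]
      rw [iha (le_trans (by simp [tb]) ht), hg c _ (by have : c + 1 ≤ tb (T.app c a) := by simp [tb]
                                                       omega)]

def lst : List T → T
  | [] => .nil
  | t :: ts => .cons t (lst ts)

theorem ev_lst (g : List Ordinal.{u} → Ordinal.{u}) (xs gs : ℕ → Ordinal.{u}) (ts : List T) :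
    (ev g xs gs (lst ts)).2 = ts.map (fun t => (ev g xs gs t).1) := by
  induction ts with
  | nil => rfl
  | cons t ts ih => simp [lst, ev, ih]

theorem tb_lst {ts : List T} {k : ℕ} (h : ∀ t ∈ ts, tb t ≤ k) : tb (lst ts) ≤ k := by
  induction ts with
  | nil => simp [lst, tb]
  | cons t ts ih =>
      simp only [lst, tb, max_le_iff]
      exact ⟨h t (by simp), ih (fun t ht => h t (by simp [ht]))⟩

def fill (L : List Ordinal.{u}) (d : Ordinal.{u}) : ℕ → Ordinal.{u} := fun n => L.getD n d

theorem fill_range (g : ℕ → Ordinal.{u}) (m n : ℕ) (d : Ordinal.{u}) (h : n < m) :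
    fill ((List.range m).map g) d n = g n := by
  rw [fill, List.getD_eq_getElem _ _ (by simpa using h)]
  simp

noncomputable def toNatO (o : Ordinal.{u}) : ℕ :=
  if h : o < Ordinal.omega0 then Classical.choose (Ordinal.lt_omega0.mp h) else 0

theorem toNatO_cast (n : ℕ) : toNatO (n : Ordinal.{u}) = n := by
  have h : (n : Ordinal.{u}) < Ordinal.omega0 := Ordinal.nat_lt_omega0 n
  rw [toNatO, dif_pos h]
  have := Classical.choose_spec (Ordinal.lt_omega0.mp h)
  exact_mod_cast this.symm

noncomputable def cEquiv (α : Ordinal.{u}) : (Set.Iio α) ≃ (Set.Iio α.card.ord) :=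
  Classical.choice (Cardinal.eq.mp
    (by rw [Ordinal.mk_Iio_ordinal, Ordinal.mk_Iio_ordinal, Cardinal.card_ord]))

noncomputable def binv (α v : Ordinal.{u}) : Ordinal.{u} :=
  if h : v < α then ((cEquiv α) ⟨v, h⟩ : Set.Iio α.card.ord).1 else 0

theorem binv_lt {α v : Ordinal.{u}} (h : v < α) : binv α v < α.card.ord := by
  rw [binv, dif_pos h]; exact ((cEquiv α) ⟨v, h⟩).2

noncomputable def unbinv (α u : Ordinal.{u}) : Ordinal.{u} :=
  if h : u < α.card.ord then ((cEquiv α).symm ⟨u, h⟩ : Set.Iio α).1 else 0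

theorem unbinv_binv {α v : Ordinal.{u}} (h : v < α) : unbinv α (binv α v) = v := by
  rw [unbinv, dif_pos (binv_lt h)]
  have : (⟨binv α v, binv_lt h⟩ : Set.Iio α.card.ord) = (cEquiv α) ⟨v, h⟩ := by
    apply Subtype.ext
    show binv α v = _
    rw [binv, dif_pos h]
  rw [this, Equiv.symm_apply_apply]


noncomputable def toOrd (o : Ordinal.{u}) (x : o.ToType) : Ordinal.{u} :=
  (((Ordinal.ToType.mk (o := o))).symm x).1

theorem toOrd_lt (o : Ordinal.{u}) (x : o.ToType) : toOrd o x < o :=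
  (((Ordinal.ToType.mk (o := o))).symm x).2

theorem toOrd_list_surj (o : Ordinal.{u}) (L : List Ordinal.{u}) (h : ∀ x ∈ L, x < o) :
    ∃ σ : List o.ToType, σ.map (toOrd o) = L := by
  induction L with
  | nil => exact ⟨[], rfl⟩
  | cons a L ih =>
      obtain ⟨σ, hσ⟩ := ih (fun x hx => h x (by simp [hx]))
      refine ⟨((Ordinal.ToType.mk (o := o))) ⟨a, h a (by simp)⟩ :: σ, ?_⟩
      simp [hσ, toOrd]

section Alg

variable (f : List Ordinal.{u} → Ordinal.{u}) (lam lam0 kap0 : Cardinal.{u})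
  (es : Ordinal.{u} → List Ordinal.{u} → Ordinal.{u})

open Classical in
/-- base operations: tag 0 = successor, tag 1 = f, tag 2 = collapse -/
noncomputable def bop (l : List Ordinal.{u}) : Ordinal.{u} :=
  if l = [] then 0
  else if l.headD 0 = (0 : Ordinal.{u}) then (l.getD 1 0) + 1
  else if l.headD 0 = (1 : Ordinal.{u}) then f l.tail
  else if l.headD 0 = (2 : Ordinal.{u}) then
    (if l.getD 2 0 < l.getD 1 0 ∧ l.getD 1 0 < lam0.ord then binv (l.getD 1 0) (l.getD 2 0) else 0)
  else 0

open Classical in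
noncomputable def Mb (g : List Ordinal.{u} → Ordinal.{u}) (n η : Ordinal.{u})
    (xs : List Ordinal.{u}) : Ordinal.{u} :=
  let raw := max (iterSucc lam η).ord
    (Ordinal.lsub fun σ : List (kap0.ord.ToType) =>
      let v := (ev g (fill xs 0) (fill (σ.map (toOrd kap0.ord)) 0) (dec (toNatO n))).1
      if v < (iterSucc lam (η+1)).ord then v + 1 else 0)
  if raw < lam0.ord then raw else 0

open Classical in
noncomputable def Cb (g : List Ordinal.{u} → Ordinal.{u}) (n : Ordinal.{u})
    (xs : List Ordinal.{u}) : Ordinal.{u} :=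
  if h : ∃ δ, δ < lam0.ord ∧ ∀ L : List Ordinal.{u}, (∀ x ∈ L, x < kap0.ord) →
      es δ L = (if (ev g (fill xs 0) (fill L 0) (dec (toNatO n))).1 < lam.ord
        then (ev g (fill xs 0) (fill L 0) (dec (toNatO n))).1 else 0)
  then h.choose else 0

open Classical in
noncomputable def Fst : ℕ → List Ordinal.{u} → Ordinal.{u}
  | 0 => bop f lam0
  | (k+1) => fun l =>
      if l.headD 0 = ((5+k : ℕ) : Ordinal.{u}) then
        if l.getD 1 0 = 0 then Mb lam lam0 kap0 (Fst k) (l.getD 2 0) (l.getD 3 0) (l.drop 4)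
        else if l.getD 1 0 = 1 then Cb lam lam0 kap0 es (Fst k) (l.getD 2 0) (l.drop 3)
        else 0
      else Fst k l

noncomputable def fp (l : List Ordinal.{u}) : Ordinal.{u} :=
  Fst f lam lam0 kap0 es (toNatO (l.headD 0) + 1) l

theorem Fst_succ_ne (k : ℕ) (l : List Ordinal.{u}) (h : l.headD 0 ≠ ((5+k : ℕ) : Ordinal.{u})) :
    Fst f lam lam0 kap0 es (k+1) l = Fst f lam lam0 kap0 es k l := by
  simp only [Fst]
  rw [if_neg h]

theorem Fst_stable {k m : ℕ} (hkm : k ≤ m) (l : List Ordinal.{u})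
    (h : ∀ j : ℕ, l.headD 0 = (j : Ordinal.{u}) → j < 5 + k) :
    Fst f lam lam0 kap0 es m l = Fst f lam lam0 kap0 es k l := by
  induction m with
  | zero => interval_cases k; rfl
  | succ m ih =>
      rcases eq_or_lt_of_le hkm with rfl | hlt
      · rfl
      · have hm : k ≤ m := by omega
        rw [Fst_succ_ne]
        · exact ih hm
        · intro heq
          have := h (5+m) heq
          omega

theorem fp_eq_Fst (l : List Ordinal.{u}) (k : ℕ)
    (h : ∀ j : ℕ, l.headD 0 = (j : Ordinal.{u}) → j < 5 + k) :
    fp f lam lam0 kap0 es l = Fst f lam lam0 kap0 es k l := by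
  rw [fp]
  by_cases hh : l.headD 0 < Ordinal.omega0
  · obtain ⟨n, hn⟩ := Ordinal.lt_omega0.mp hh
    have hto : toNatO (l.headD 0) = n := by rw [hn, toNatO_cast]
    have hn5 : n < 5 + k := h n hn
    rw [hto]
    have h1 : ∀ j : ℕ, l.headD 0 = (j : Ordinal.{u}) → j < 5 + min (n+1) k := by
      intro j hj
      have : j = n := by
        rw [hn] at hj; exact_mod_cast hj.symm
      omega
    rw [Fst_stable f lam lam0 kap0 es (min_le_left (n+1) k) l h1,
      ← Fst_stable f lam lam0 kap0 es (min_le_right (n+1) k) l h1]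
  · have hto : toNatO (l.headD 0) = 0 := by rw [toNatO, dif_neg hh]
    rw [hto]
    have h1 : ∀ j : ℕ, l.headD 0 = (j : Ordinal.{u}) → j < 5 + 0 := by
      intro j hj
      exact absurd (hj ▸ Ordinal.nat_lt_omega0 j) hh
    rw [Fst_stable f lam lam0 kap0 es (Nat.zero_le 1) l h1,
      ← Fst_stable f lam lam0 kap0 es (Nat.zero_le k) l h1]

theorem ev_fp_stable (k : ℕ) {t : T} (ht : tb t ≤ k) (xs gs : ℕ → Ordinal.{u}) :
    ev (Fst f lam lam0 kap0 es k) xs gs t = ev (fp f lam lam0 kap0 es) xs gs t := by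
  refine ev_congr (fun c L hc => ?_) xs gs ht
  rw [fp_eq_Fst f lam lam0 kap0 es _ k]
  intro j hj
  have hj' : j = c := by
    have : ((c:ℕ) : Ordinal.{u}) = (j : Ordinal.{u}) := by simpa using hj
    exact_mod_cast this.symm
  omega

theorem fp_nil : fp f lam lam0 kap0 es [] = 0 := by
  have h0 : (([] : List Ordinal.{u}).headD 0) = ((0:ℕ) : Ordinal.{u}) := by simp
  rw [fp_eq_Fst f lam lam0 kap0 es [] 0 (by intro j hj; rw [h0] at hj
                                            have : j = 0 := by exact_mod_cast hj.symm
                                            omega)]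
  simp [Fst, bop]

theorem fp_nonnat {l : List Ordinal.{u}} (h : ¬ l.headD 0 < Ordinal.omega0) :
    fp f lam lam0 kap0 es l = 0 := by
  have hl : l ≠ [] := by
    intro he; rw [he] at h; exact h (by simpa using Ordinal.omega0_pos)
  have hne : ∀ j : ℕ, l.headD 0 ≠ (j : Ordinal.{u}) := by
    intro j hj; exact h (hj ▸ Ordinal.nat_lt_omega0 j)
  rw [fp_eq_Fst f lam lam0 kap0 es l 0 (fun j hj => absurd hj (hne j))]
  simp only [Fst, bop]
  rw [if_neg hl, if_neg (by simpa using hne 0), if_neg (by simpa using hne 1),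
    if_neg (by simpa using hne 2)]

theorem fp_succ (r : List Ordinal.{u}) :
    fp f lam lam0 kap0 es ((0 : Ordinal.{u}) :: r) = (r.getD 0 0) + 1 := by
  rw [fp_eq_Fst f lam lam0 kap0 es _ 0 (by intro j hj
                                           have h2 : (0 : Ordinal.{u}) = (j : Ordinal.{u}) := by
                                             simpa using hj
                                           have : j = 0 := by exact_mod_cast h2.symm
                                           omega)]
  simp [Fst, bop]

theorem fp_f (r : List Ordinal.{u}) :
    fp f lam lam0 kap0 es ((1 : Ordinal.{u}) :: r) = f r := by
  rw [fp_eq_Fst f lam lam0 kap0 es _ 0 (by intro j hj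
                                           have h2 : (1 : Ordinal.{u}) = (j : Ordinal.{u}) := by
                                             simpa using hj
                                           have : j = 1 := by exact_mod_cast h2.symm
                                           omega)]
  simp only [Fst, bop]
  rw [if_neg (by simp), if_neg (by simp), if_pos (by simp)]
  simp

theorem fp_binv (α v : Ordinal.{u}) :
    fp f lam lam0 kap0 es ((2 : Ordinal.{u}) :: α :: v :: []) =
      (if v < α ∧ α < lam0.ord then binv α v else 0) := by
  rw [fp_eq_Fst f lam lam0 kap0 es _ 0 (by intro j hj
                                           have h2 : (2 : Ordinal.{u}) = (j : Ordinal.{u}) := by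
                                             simpa using hj
                                           have : j = 2 := by exact_mod_cast h2.symm
                                           omega)]
  simp only [Fst, bop]
  rw [if_neg (by simp), if_neg (by norm_num), if_neg (by norm_num), if_pos (by simp)]
  simp

theorem fp_M (k : ℕ) (n η : Ordinal.{u}) (xs : List Ordinal.{u}) :
    fp f lam lam0 kap0 es (((5+k : ℕ) : Ordinal.{u}) :: (0 : Ordinal.{u}) :: n :: η :: xs) =
      Mb lam lam0 kap0 (Fst f lam lam0 kap0 es k) n η xs := by
  rw [fp_eq_Fst f lam lam0 kap0 es _ (k+1) (by intro j hj
                                               have h2 : ((5+k:ℕ) : Ordinal.{u}) = (j : Ordinal.{u}) := by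
                                                 simpa using hj
                                               have : j = 5 + k := by exact_mod_cast h2.symm
                                               omega)]
  simp only [Fst]
  rw [if_pos (by simp), if_pos (by simp)]
  simp

theorem fp_C (k : ℕ) (n : Ordinal.{u}) (xs : List Ordinal.{u}) :
    fp f lam lam0 kap0 es (((5+k : ℕ) : Ordinal.{u}) :: (1 : Ordinal.{u}) :: n :: xs) =
      Cb lam lam0 kap0 es (Fst f lam lam0 kap0 es k) n xs := by
  rw [fp_eq_Fst f lam lam0 kap0 es _ (k+1) (by intro j hj
                                               have h2 : ((5+k:ℕ) : Ordinal.{u}) = (j : Ordinal.{u}) := by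
                                                 simpa using hj
                                               have : j = 5 + k := by exact_mod_cast h2.symm
                                               omega)]
  simp only [Fst]
  rw [if_pos (by simp), if_neg (by norm_num), if_pos (by simp)]
  simp

end Alg

theorem getD_lt {l : List Ordinal.{u}} {b : Ordinal.{u}} (hl : ∀ x ∈ l, x < b) (hb : (0:Ordinal.{u}) < b)
    (n : ℕ) : l.getD n 0 < b := by
  by_cases h : n < l.length
  · rw [List.getD_eq_getElem _ _ h]
    exact hl _ (List.getElem_mem h)
  · rw [List.getD_eq_default _ _ (by omega)]
    exact hb

section Bound

variable {f : List Ordinal.{u} → Ordinal.{u}} {lam lam0 kap0 lam1 : Cardinal.{u}}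
  {es : Ordinal.{u} → List Ordinal.{u} → Ordinal.{u}}

variable (hf : ∀ l : List Ordinal.{u}, (∀ x ∈ l, x < lam1.ord) → f l < lam1.ord)
  (hl01 : lam0.ord ≤ lam1.ord) (hl1 : ℵ₀ ≤ lam1)

include hl1 in
theorem lam1_pos : (0:Ordinal.{u}) < lam1.ord := by
  rw [Cardinal.lt_ord]
  simpa using lt_of_lt_of_le Cardinal.aleph0_pos hl1

include hf hl01 hl1 in
theorem bop_lt (l : List Ordinal.{u}) (hl : ∀ x ∈ l, x < lam1.ord) :
    bop f lam0 l < lam1.ord := by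
  have hpos := lam1_pos (lam1 := lam1) hl1
  rw [bop]
  split
  · exact hpos
  split
  · have := getD_lt hl hpos 1
    exact (Cardinal.isSuccLimit_ord hl1).succ_lt this
  split
  · exact hf _ (fun x hx => hl x (List.mem_of_mem_tail hx))
  split
  · split
    · rename_i hcond
      have h1 : binv (l.getD 1 0) (l.getD 2 0) < l.getD 1 0 :=
        lt_of_lt_of_le (binv_lt hcond.1) (Cardinal.ord_card_le _)
      exact h1.trans (hcond.2.trans_le hl01)
    · exact hpos
  · exact hpos

include hf hl01 hl1 in
theorem Fst_lt (k : ℕ) (l : List Ordinal.{u}) (hl : ∀ x ∈ l, x < lam1.ord) :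
    Fst f lam lam0 kap0 es k l < lam1.ord := by
  have hpos := lam1_pos (lam1 := lam1) hl1
  induction k generalizing l with
  | zero => exact bop_lt hf hl01 hl1 l hl
  | succ k ih =>
      simp only [Fst]
      split
      · split
        · rw [Mb]
          split
          · rename_i hraw
            exact lt_of_lt_of_le hraw hl01
          · exact hpos
        split
        · rw [Cb]
          split
          · rename_i hex
            exact lt_of_lt_of_le hex.choose_spec.1 hl01
          · exact hpos
        · exact hpos
      · exact ih l hl

include hf hl01 hl1 in
theorem fp_lt (l : List Ordinal.{u}) (hl : ∀ x ∈ l, x < lam1.ord) :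
    fp f lam lam0 kap0 es l < lam1.ord :=
  Fst_lt hf hl01 hl1 _ l hl

end Bound

theorem ev_lt {g : List Ordinal.{u} → Ordinal.{u}} {lam1 : Cardinal.{u}}
    (hg : ∀ l : List Ordinal.{u}, (∀ x ∈ l, x < lam1.ord) → g l < lam1.ord)
    (hl1 : ℵ₀ ≤ lam1)
    {xs gs : ℕ → Ordinal.{u}} (hxs : ∀ n, xs n < lam1.ord) (hgs : ∀ n, gs n < lam1.ord)
    (t : T) :
    (ev g xs gs t).1 < lam1.ord ∧ ∀ x ∈ (ev g xs gs t).2, x < lam1.ord := by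
  have hω : Ordinal.omega0 ≤ lam1.ord := by
    rw [← Cardinal.ord_aleph0]
    exact Cardinal.ord_le_ord.mpr hl1
  induction t with
  | var n => exact ⟨hxs n, by simp [ev]⟩
  | par n => exact ⟨hgs n, by simp [ev]⟩
  | nil => exact ⟨lam1_pos hl1, by simp [ev]⟩
  | cons a b iha ihb =>
      refine ⟨lam1_pos hl1, ?_⟩
      intro x hx
      simp only [ev, List.mem_cons] at hx
      rcases hx with rfl | hx
      · exact iha.1
      · exact ihb.2 x hx
  | app c a iha =>
      constructor
      · refine hg _ ?_
        intro x hx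
        simp only [List.mem_cons] at hx
        rcases hx with rfl | hx
        · exact lt_of_lt_of_le (Ordinal.nat_lt_omega0 c) hω
        · exact iha.2 x hx
      · simp [ev]

def ESet (g : List Ordinal.{u} → Ordinal.{u}) (X : Set Ordinal.{u}) (kap0 : Cardinal.{u}) :
    Set Ordinal.{u} :=
  {v | ∃ (t : T) (xs gs : ℕ → Ordinal.{u}),
    (∀ n, xs n ∈ X) ∧ (∀ n, gs n < kap0.ord) ∧ v = (ev g xs gs t).1}

theorem mem_ESet_of_mem {g : List Ordinal.{u} → Ordinal.{u}} {X : Set Ordinal.{u}}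
    {kap0 : Cardinal.{u}} (hk : (0:Ordinal.{u}) < kap0.ord) {x : Ordinal.{u}} (hx : x ∈ X) :
    x ∈ ESet g X kap0 :=
  ⟨.var 0, fun _ => x, fun _ => 0, fun _ => hx, fun _ => hk, rfl⟩

theorem mem_ESet_of_lt {g : List Ordinal.{u} → Ordinal.{u}} {X : Set Ordinal.{u}}
    {kap0 : Cardinal.{u}} {x₀ : Ordinal.{u}} (hx₀ : x₀ ∈ X) {γ : Ordinal.{u}}
    (hγ : γ < kap0.ord) : γ ∈ ESet g X kap0 :=
  ⟨.par 0, fun _ => x₀, fun _ => γ, fun _ => hx₀, fun _ => hγ, rfl⟩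

theorem combine {g : List Ordinal.{u} → Ordinal.{u}} {X : Set Ordinal.{u}}
    {kap0 : Cardinal.{u}} {x₀ : Ordinal.{u}} (hx₀ : x₀ ∈ X) (hk : (0:Ordinal.{u}) < kap0.ord)
    (vs : List Ordinal.{u}) (h : ∀ v ∈ vs, v ∈ ESet g X kap0) :
    ∃ (xs gs : ℕ → Ordinal.{u}) (ts : List T),
      (∀ n, xs n ∈ X) ∧ (∀ n, gs n < kap0.ord) ∧
      ts.map (fun t => (ev g xs gs t).1) = vs := by
  induction vs with
  | nil => exact ⟨fun _ => x₀, fun _ => 0, [], fun _ => hx₀, fun _ => hk, rfl⟩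
  | cons v vs ih =>
      obtain ⟨xs1, gs1, ts, hxs1, hgs1, hts⟩ := ih (fun w hw => h w (by simp [hw]))
      obtain ⟨t0, xs0, gs0, hxs0, hgs0, hv0⟩ := h v (by simp)
      refine ⟨fun m => if m % 2 = 0 then xs0 (m / 2) else xs1 (m / 2),
        fun m => if m % 2 = 0 then gs0 (m / 2) else gs1 (m / 2),
        ren (fun i => 2*i) (fun i => 2*i) t0 ::
          ts.map (ren (fun i => 2*i+1) (fun i => 2*i+1)), ?_, ?_, ?_⟩
      · intro n; dsimp only; split
        · exact hxs0 _
        · exact hxs1 _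
      · intro n; dsimp only; split
        · exact hgs0 _
        · exact hgs1 _
      · have heven : ∀ (w1 w0 : ℕ → Ordinal.{u}),
            ((fun m => if m % 2 = 0 then w0 (m / 2) else w1 (m / 2)) ∘ fun i => 2*i) = w0 := by
          intro w1 w0; funext i
          have h1 : (2*i) % 2 = 0 := by omega
          have h2 : (2*i) / 2 = i := by omega
          simp [h1, h2]
        have hodd : ∀ (w1 w0 : ℕ → Ordinal.{u}),
            ((fun m => if m % 2 = 0 then w0 (m / 2) else w1 (m / 2)) ∘ fun i => 2*i+1) = w1 := by
          intro w1 w0; funext i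
          have h1 : (2*i+1) % 2 = 1 := by omega
          have h2 : (2*i+1) / 2 = i := by omega
          simp [h1, h2]
        simp only [List.map_cons, List.map_map, ev_ren]
        refine List.cons_eq_cons.mpr ⟨?_, ?_⟩
        · rw [heven, heven]
          exact hv0.symm
        · rw [← hts]
          apply List.map_congr_left
          intro t _
          simp only [Function.comp_apply, ev_ren]
          rw [hodd, hodd]


section Closure

variable (f : List Ordinal.{u} → Ordinal.{u}) (lam lam0 kap0 : Cardinal.{u})
  (es : Ordinal.{u} → List Ordinal.{u} → Ordinal.{u})

theorem ESet_closed (X : Set Ordinal.{u}) {x₀ : Ordinal.{u}} (hx₀ : x₀ ∈ X)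
    (hk : (0:Ordinal.{u}) < kap0.ord) (l : List Ordinal.{u})
    (hl : ∀ v ∈ l, v ∈ ESet (fp f lam lam0 kap0 es) X kap0) :
    fp f lam lam0 kap0 es l ∈ ESet (fp f lam lam0 kap0 es) X kap0 := by
  cases l with
  | nil =>
      rw [fp_nil]
      exact mem_ESet_of_lt hx₀ hk
  | cons v rest =>
      by_cases hv : v < Ordinal.omega0
      · obtain ⟨c, rfl⟩ := Ordinal.lt_omega0.mp hv
        obtain ⟨xs, gs, ts, hxs, hgs, hts⟩ :=
          combine hx₀ hk rest (fun w hw => hl w (List.mem_cons_of_mem _ hw))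
        refine ⟨.app c (lst ts), xs, gs, hxs, hgs, ?_⟩
        simp only [ev]
        rw [ev_lst, hts]
      · rw [fp_nonnat f lam lam0 kap0 es (by simpa using hv)]
        exact mem_ESet_of_lt hx₀ hk

end Closure

theorem iterSucc_zero (κ : Cardinal.{u}) : iterSucc κ 0 = κ := by
  rw [iterSucc, Ordinal.limitRecOn_zero]

theorem iterSucc_succ (κ : Cardinal.{u}) (o : Ordinal.{u}) :
    iterSucc κ (o + 1) = Order.succ (iterSucc κ o) := by
  rw [iterSucc, Ordinal.add_one_eq_succ, Ordinal.limitRecOn_succ]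
  rfl

theorem iterSucc_limit (κ : Cardinal.{u}) {o : Ordinal.{u}} (ho : Order.IsSuccLimit o) :
    iterSucc κ o = ⨆ η : Set.Iio o, iterSucc κ η.1 := by
  rw [iterSucc, Ordinal.limitRecOn_limit _ _ _ _ ho]
  rfl

theorem iterSucc_mono (κ : Cardinal.{u}) : ∀ {b a : Ordinal.{u}}, a ≤ b →
    iterSucc κ a ≤ iterSucc κ b := by
  intro b
  induction b using Ordinal.induction with
  | _ b IH =>
    intro a hab
    rcases Ordinal.zero_or_succ_or_isSuccLimit b with rfl | ⟨o, rfl⟩ | hlim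
    · rw [nonpos_iff_eq_zero.mp hab]
    · rcases eq_or_lt_of_le hab with rfl | hlt
      · exact le_rfl
      · have ha : a ≤ o := Order.lt_succ_iff.mp hlt
        refine (IH o (Order.lt_succ_iff.mpr le_rfl) ha).trans ?_
        rw [← Ordinal.add_one_eq_succ, iterSucc_succ]
        exact Order.le_succ _
    · rcases eq_or_lt_of_le hab with rfl | hlt
      · exact le_rfl
      · rw [iterSucc_limit κ hlim]
        exact le_ciSup Cardinal.bddAbove_of_small (⟨a, hlt⟩ : Set.Iio b)

theorem le_iterSucc (κ : Cardinal.{u}) (o : Ordinal.{u}) : κ ≤ iterSucc κ o := by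
  have := iterSucc_mono κ (zero_le : (0:Ordinal.{u}) ≤ o)
  rwa [iterSucc_zero] at this

theorem lt_iterSucc_limit (κ : Cardinal.{u}) {o : Ordinal.{u}} (ho : Order.IsSuccLimit o)
    {v : Ordinal.{u}} (hv : v < (iterSucc κ o).ord) :
    ∃ η < o, v < (iterSucc κ η).ord := by
  by_contra hcon
  push_neg at hcon
  haveI : Nonempty (Set.Iio o) := ⟨⟨0, ho.pos⟩⟩
  have hall : ∀ η : Set.Iio o, iterSucc κ η.1 ≤ v.card := by
    rintro ⟨η, hη⟩
    exact Cardinal.ord_le.mp (hcon η hη)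
  have hle : iterSucc κ o ≤ v.card := by
    rw [iterSucc_limit κ ho]
    exact ciSup_le' hall
  exact absurd (Cardinal.lt_ord.mp hv) (not_lt.mpr hle)


theorem pmap_val {p : Ordinal.{u} → Prop} (L : List Ordinal.{u}) (h : ∀ x ∈ L, p x) :
    (L.pmap (fun x hx => (⟨x, hx⟩ : Subtype p)) h).map Subtype.val = L := by
  induction L with
  | nil => rfl
  | cons a L ih => simp only [List.pmap, List.map_cons, ih]

theorem Mb_cov (lam lam0 kap0 : Cardinal.{u}) (g : List Ordinal.{u} → Ordinal.{u})
    (hk0 : ℵ₀ ≤ kap0) {η : Ordinal.{u}} (hbig : kap0 < iterSucc lam (η+1))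
    (hble : iterSucc lam (η+1) ≤ lam0) (n : Ordinal.{u}) (xs : List Ordinal.{u}) :
    (iterSucc lam η).ord ≤ Mb lam lam0 kap0 g n η xs ∧
    Mb lam lam0 kap0 g n η xs < (iterSucc lam (η+1)).ord ∧
    ∀ (gs : List Ordinal.{u}), (∀ x ∈ gs, x < kap0.ord) →
      (ev g (fill xs 0) (fill gs 0) (dec (toNatO n))).1 < (iterSucc lam (η+1)).ord →
      (ev g (fill xs 0) (fill gs 0) (dec (toNatO n))).1 < Mb lam lam0 kap0 g n η xs := by
  have hbsucc : iterSucc lam (η+1) = Order.succ (iterSucc lam η) := iterSucc_succ lam η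
  have hfloor : ℵ₀ ≤ iterSucc lam η := by
    by_contra hc
    push_neg at hc
    have h1 : iterSucc lam (η+1) ≤ ℵ₀ := by
      rw [hbsucc]
      exact Order.succ_le_iff.mpr hc
    exact absurd (h1.trans hk0) (not_le.mpr hbig)
  have hreg : (iterSucc lam (η+1)).IsRegular := hbsucc ▸ Cardinal.isRegular_succ hfloor
  have hlim : Order.IsSuccLimit (iterSucc lam (η+1)).ord := Cardinal.isSuccLimit_ord hreg.aleph0_le
  have hpos : (0 : Ordinal.{u}) < (iterSucc lam (η+1)).ord := hlim.pos
  haveI : Nonempty (kap0.ord.ToType) := by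
    rw [Ordinal.toType_nonempty_iff_ne_zero]
    intro h0
    have hzz : kap0 = 0 := by rw [← Cardinal.card_ord kap0, h0, Ordinal.card_zero]
    rw [hzz] at hk0
    exact Cardinal.aleph0_pos.not_ge hk0
  have hraw : max (iterSucc lam η).ord
      (Ordinal.lsub fun σ : List (kap0.ord.ToType) =>
        let v := (ev g (fill xs 0) (fill (σ.map (toOrd kap0.ord)) 0) (dec (toNatO n))).1
        if v < (iterSucc lam (η+1)).ord then v + 1 else 0) < (iterSucc lam (η+1)).ord := by
    apply max_lt
    · exact Cardinal.ord_lt_ord.mpr (hbsucc ▸ Order.lt_succ _)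
    · apply Ordinal.lsub_lt_ord
      · rw [hreg.cof_eq]
        refine lt_of_le_of_lt (Cardinal.mk_list_le_max _) ?_
        rw [Cardinal.mk_toType, Cardinal.card_ord, max_eq_right hk0]
        exact hbig
      · intro σ
        dsimp only
        split
        · exact hlim.succ_lt (by assumption)
        · exact hpos
  have hMb : Mb lam lam0 kap0 g n η xs = max (iterSucc lam η).ord
      (Ordinal.lsub fun σ : List (kap0.ord.ToType) =>
        let v := (ev g (fill xs 0) (fill (σ.map (toOrd kap0.ord)) 0) (dec (toNatO n))).1
        if v < (iterSucc lam (η+1)).ord then v + 1 else 0) := by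
    rw [Mb]
    exact if_pos (lt_of_lt_of_le hraw (Cardinal.ord_le_ord.mpr hble))
  refine ⟨?_, ?_, ?_⟩
  · rw [hMb]; exact le_max_left _ _
  · rw [hMb]; exact hraw
  · intro gs hgs hvlt
    obtain ⟨σ, hσ⟩ := toOrd_list_surj kap0.ord gs hgs
    rw [hMb]
    refine lt_of_lt_of_le ?_ (le_max_right _ _)
    have := Ordinal.lt_lsub (fun σ : List (kap0.ord.ToType) =>
        let v := (ev g (fill xs 0) (fill (σ.map (toOrd kap0.ord)) 0) (dec (toNatO n))).1
        if v < (iterSucc lam (η+1)).ord then v + 1 else 0) σ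
    dsimp only at this
    rw [hσ, if_pos hvlt] at this
    exact lt_trans (lt_of_lt_of_le (lt_add_one _) le_rfl) this

theorem Cb_cov (lam lam0 kap0 : Cardinal.{u}) (es : Ordinal.{u} → List Ordinal.{u} → Ordinal.{u})
    (g : List Ordinal.{u} → Ordinal.{u})
    (hes : ∀ φ : List Ordinal.{u} → Ordinal.{u}, (∀ L, φ L < lam.ord) →
        ∃ δ, δ < lam0.ord ∧ ∀ L, (∀ x ∈ L, x < kap0.ord) → es δ L = φ L)
    (hlpos : (0 : Ordinal.{u}) < lam.ord) (hl0pos : (0 : Ordinal.{u}) < lam0.ord)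
    (n : Ordinal.{u}) (xs : List Ordinal.{u}) :
    Cb lam lam0 kap0 es g n xs < lam0.ord ∧
    ∀ (gs : List Ordinal.{u}), (∀ x ∈ gs, x < kap0.ord) →
      (ev g (fill xs 0) (fill gs 0) (dec (toNatO n))).1 < lam.ord →
      es (Cb lam lam0 kap0 es g n xs) gs = (ev g (fill xs 0) (fill gs 0) (dec (toNatO n))).1 := by
  have hcond : ∃ δ, δ < lam0.ord ∧ ∀ L : List Ordinal.{u}, (∀ x ∈ L, x < kap0.ord) →
      es δ L = (if (ev g (fill xs 0) (fill L 0) (dec (toNatO n))).1 < lam.ord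
        then (ev g (fill xs 0) (fill L 0) (dec (toNatO n))).1 else 0) := by
    apply hes
    intro L
    split
    · assumption
    · exact hlpos
  have hCb : Cb lam lam0 kap0 es g n xs = hcond.choose := by
    rw [Cb, dif_pos hcond]
  constructor
  · rw [hCb]; exact hcond.choose_spec.1
  · intro gs hgs hvlt
    rw [hCb, hcond.choose_spec.2 gs hgs, if_pos hvlt]

theorem mk_image2_le {α β γ : Type v} (F : α → β → γ) (s : Set α) (t : Set β) :
    #(Set.image2 F s t) ≤ #s * #t := by
  rw [← Set.image_prod]
  refine Cardinal.mk_image_le.trans ?_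
  rw [Cardinal.mk_congr (Equiv.Set.prod s t), Cardinal.mk_prod, Cardinal.lift_id, Cardinal.lift_id]

theorem mk_listSet_le (o : Ordinal.{u}) :
    #({L : List Ordinal.{u} | ∀ x ∈ L, x < o}) ≤ max ℵ₀ (Cardinal.lift.{u+1} o.card) := by
  have hinj : Function.Injective (fun (p : {L : List Ordinal.{u} // ∀ x ∈ L, x < o}) =>
      (p.1.pmap (fun x hx => (⟨x, hx⟩ : Set.Iio o)) p.2 : List (Set.Iio o))) := by
    intro p q hpq
    apply Subtype.ext
    have h1 := congrArg (List.map Subtype.val) hpq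
    dsimp only at h1
    exact (pmap_val (p := fun x => x ∈ Set.Iio o) p.1 p.2).symm.trans
      (h1.trans (pmap_val (p := fun x => x ∈ Set.Iio o) q.1 q.2))
  refine (Cardinal.mk_le_of_injective hinj).trans ?_
  refine (Cardinal.mk_list_le_max _).trans ?_
  rw [Ordinal.mk_Iio_ordinal]

theorem build_es (lam lam0 kap0 : Cardinal.{u}) (hpow : lam ^ kap0 ≤ lam0)
    (hk0 : ℵ₀ ≤ kap0) (hkl : kap0 < lam) :
    ∃ es : Ordinal.{u} → List Ordinal.{u} → Ordinal.{u},
      ∀ φ : List Ordinal.{u} → Ordinal.{u}, (∀ L, φ L < lam.ord) →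
        ∃ δ, δ < lam0.ord ∧ ∀ L, (∀ x ∈ L, x < kap0.ord) → es δ L = φ L := by
  classical
  haveI : Nonempty (Set.Iio kap0.ord) := ⟨⟨0, by
    simp only [Set.mem_Iio]
    rw [Cardinal.lt_ord, Ordinal.card_zero]
    exact lt_of_lt_of_le Cardinal.aleph0_pos hk0⟩⟩
  have hcard : #(List (Set.Iio kap0.ord) → Set.Iio lam.ord) ≤ #(Set.Iio lam0.ord) := by
    rw [← Cardinal.power_def, Ordinal.mk_Iio_ordinal, Cardinal.card_ord,
      Cardinal.mk_list_eq_max_mk_aleph0, Ordinal.mk_Iio_ordinal, Cardinal.card_ord,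
      max_eq_left (by simpa using hk0), Ordinal.mk_Iio_ordinal, Cardinal.card_ord,
      ← Cardinal.lift_power]
    exact Cardinal.lift_le.mpr hpow
  obtain ⟨emb⟩ := (Cardinal.le_def _ _).mp hcard
  refine ⟨fun δ L => if h : (∃ F : List (Set.Iio kap0.ord) → Set.Iio lam.ord,
      ((emb F : Set.Iio lam0.ord) : Ordinal.{u}) = δ) ∧ (∀ x ∈ L, x < kap0.ord)
      then ((Classical.choose h.1) (L.pmap (fun x hx => (⟨x, hx⟩ : Set.Iio kap0.ord)) h.2) :
        Set.Iio lam.ord).1 else 0, ?_⟩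
  intro φ hφ
  set F : List (Set.Iio kap0.ord) → Set.Iio lam.ord := fun σ => ⟨φ (σ.map Subtype.val), hφ _⟩
    with hF
  refine ⟨(emb F : Set.Iio lam0.ord).1, (emb F).2, ?_⟩
  intro L hL
  have hex : ∃ F' : List (Set.Iio kap0.ord) → Set.Iio lam.ord,
      ((emb F' : Set.Iio lam0.ord) : Ordinal.{u}) = (emb F : Set.Iio lam0.ord).1 := ⟨F, rfl⟩
  dsimp only
  rw [dif_pos (⟨hex, hL⟩ : _ ∧ _)]
  have hFF : Classical.choose hex = F := by
    have hsp := Classical.choose_spec hex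
    exact emb.injective (Subtype.ext hsp)
  show ((Classical.choose hex) (L.pmap (fun x hx => (⟨x, hx⟩ : Set.Iio kap0.ord)) hL) :
    Set.Iio lam.ord).1 = φ L
  rw [hFF, hF]
  dsimp only
  exact congrArg φ (pmap_val (p := fun x => x ∈ Set.Iio kap0.ord) L hL)


theorem changXi_main (lam1 lam0 kap1 kap0 lam : Cardinal.{u}) (ξ : Ordinal.{u})
    (hlam0 : ℵ₀ ≤ lam0) (hkap0 : ℵ₀ ≤ kap0)
    (hlam : lam0 ≤ lam1) (hkap : kap0 ≤ kap1) (hξ : ξ < kap0.ord)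
    (heq : lam0 = iterSucc lam ξ)
    (hc : lam ≤ kap0 ∨ (kap0 < lam ∧ lam ^ kap0 ≤ lam0))
    (h : ChangXi lam1 lam0 kap1 kap0 ξ) :
    ChangXi lam1 lam0 kap1 kap0 kap0.ord := by
  classical
  obtain ⟨es, hes⟩ : ∃ es : Ordinal.{u} → List Ordinal.{u} → Ordinal.{u},
      kap0 < lam → ∀ φ : List Ordinal.{u} → Ordinal.{u}, (∀ L, φ L < lam.ord) →
        ∃ δ, δ < lam0.ord ∧ ∀ L, (∀ x ∈ L, x < kap0.ord) → es δ L = φ L := by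
    rcases hc with hc1 | ⟨hlt, hpow⟩
    · exact ⟨fun _ _ => 0, fun hk => absurd hk (not_lt.mpr hc1)⟩
    · obtain ⟨es, hes⟩ := build_es lam lam0 kap0 hpow hkap0 hlt
      exact ⟨es, fun _ => hes⟩
  intro f hf
  have hl1 : ℵ₀ ≤ lam1 := hlam0.trans hlam
  have hl01 : lam0.ord ≤ lam1.ord := Cardinal.ord_le_ord.mpr hlam
  have hFPlt : ∀ l, (∀ x ∈ l, x < lam1.ord) → fp f lam lam0 kap0 es l < lam1.ord :=
    fun l hl => fp_lt hf hl01 hl1 l hl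
  obtain ⟨X, hX1, hX2, hX3, hX4, hX5⟩ := h (fp f lam lam0 kap0 es) hFPlt
  have hκpos : (0:Ordinal.{u}) < kap0.ord := by
    rw [Cardinal.lt_ord, Ordinal.card_zero]
    exact lt_of_lt_of_le Cardinal.aleph0_pos hkap0
  have hωκ : Ordinal.omega0 ≤ kap0.ord := by
    rw [← Cardinal.ord_aleph0]
    exact Cardinal.ord_le_ord.mpr hkap0
  have hx0 : (0:Ordinal.{u}) ∈ X := by
    have h0 := hX3 [] (by simp)
    rwa [fp_nil] at h0
  have hnat : ∀ n : ℕ, ((n:Ordinal.{u})) ∈ X := by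
    intro n
    induction n with
    | zero => simpa using hx0
    | succ n ih =>
        have h1 := hX3 [(0:Ordinal.{u}), (n:Ordinal.{u})] (by
          intro x hx
          simp only [List.mem_cons, List.not_mem_nil, or_false] at hx
          rcases hx with rfl | rfl
          exacts [hx0, ih])
        rw [fp_succ] at h1
        simpa using h1
  have hXE : ∀ x ∈ X, x ∈ ESet (fp f lam lam0 kap0 es) X kap0 :=
    fun x hx => mem_ESet_of_mem hκpos hx
  have hIioE : ∀ γ, γ < kap0.ord → γ ∈ ESet (fp f lam lam0 kap0 es) X kap0 :=
    fun γ hγ => mem_ESet_of_lt hx0 hγ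
  have hclosed : ∀ l, (∀ v ∈ l, v ∈ ESet (fp f lam lam0 kap0 es) X kap0) →
      fp f lam lam0 kap0 es l ∈ ESet (fp f lam lam0 kap0 es) X kap0 :=
    fun l hl => ESet_closed f lam lam0 kap0 es X hx0 hκpos l hl
  have hk0l0 : kap0 ≤ lam0 := by
    have h1 : Cardinal.lift.{u+1} kap0 ≤ Cardinal.lift.{u+1} lam0 := by
      rw [← hX4]
      refine (Cardinal.mk_le_mk_of_subset Set.inter_subset_right).trans_eq ?_
      rw [Ordinal.mk_Iio_ordinal, Cardinal.card_ord]
    exact Cardinal.lift_le.mp h1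
  have hl0pos : (0:Ordinal.{u}) < lam0.ord := lt_of_lt_of_le hκpos (Cardinal.ord_le_ord.mpr hk0l0)
  -- stable evaluation through level k = tb t with listified assignments
  have hstable : ∀ (t : T) (xs gs : ℕ → Ordinal.{u}),
      (ev (fp f lam lam0 kap0 es) xs gs t).1 =
      (ev (Fst f lam lam0 kap0 es (tb t)) (fill ((List.range (vb t)).map xs) 0)
        (fill ((List.range (pb t)).map gs) 0) t).1 := by
    intro t xs gs
    rw [ev_fp_stable f lam lam0 kap0 es (tb t) le_rfl]
    rw [ev_depend (fp f lam lam0 kap0 es) t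
      (fun n hn => (fill_range xs (vb t) n 0 hn).symm)
      (fun n hn => (fill_range gs (pb t) n 0 hn).symm)]
  have covM : ∀ η : Ordinal.{u}, η < ξ → kap0 < iterSucc lam (η+1) →
      ∀ v ∈ ESet (fp f lam lam0 kap0 es) X kap0, v < (iterSucc lam (η+1)).ord →
      ∃ α u, (α ∈ X ∧ α < lam0.ord) ∧
        u ∈ ESet (fp f lam lam0 kap0 es) X kap0 ∧ u < (iterSucc lam η).ord ∧ v = unbinv α u := by
    intro η hη hbig v hvE hvlt
    obtain ⟨t, xs, gs, hxs, hgs, hveq⟩ := hvE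
    have hble : iterSucc lam (η+1) ≤ lam0 := by
      rw [heq]
      exact iterSucc_mono lam ((Ordinal.add_one_eq_succ η) ▸ Order.succ_le_iff.mpr hη)
    set xsL := (List.range (vb t)).map xs with hxsLdef
    set gsL := (List.range (pb t)).map gs with hgsLdef
    have hxsLX : ∀ x ∈ xsL, x ∈ X := by
      intro x hx
      rw [hxsLdef] at hx
      simp only [List.mem_map, List.mem_range] at hx
      obtain ⟨n, -, rfl⟩ := hx
      exact hxs n
    have hgsLlt : ∀ x ∈ gsL, x < kap0.ord := by
      intro x hx
      rw [hgsLdef] at hx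
      simp only [List.mem_map, List.mem_range] at hx
      obtain ⟨n, -, rfl⟩ := hx
      exact hgs n
    have hveq2 : v = (ev (Fst f lam lam0 kap0 es (tb t)) (fill xsL 0) (fill gsL 0) t).1 := by
      rw [hveq, hstable t xs gs]
    obtain ⟨hMlow, hMhigh, hMcov⟩ := Mb_cov lam lam0 kap0 (Fst f lam lam0 kap0 es (tb t))
      hkap0 hbig hble ((enc t : ℕ) : Ordinal.{u}) xsL
    rw [show dec (toNatO ((enc t : ℕ) : Ordinal.{u})) = t by rw [toNatO_cast, dec_enc]] at hMcov
    set α := Mb lam lam0 kap0 (Fst f lam lam0 kap0 es (tb t)) ((enc t : ℕ) : Ordinal.{u}) η xsL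
      with hαdef
    have hαX : α ∈ X := by
      have h2 := hX3 (((5 + tb t : ℕ) : Ordinal.{u}) :: (0:Ordinal.{u}) ::
          ((enc t : ℕ) : Ordinal.{u}) :: η :: xsL) (by
        intro x hx
        simp only [List.mem_cons] at hx
        rcases hx with h | h | h | h | hx
        · rw [h]; exact hnat _
        · rw [h]; exact hx0
        · rw [h]; exact hnat _
        · rw [h]; exact hX5 η hη
        · exact hxsLX x hx)
      rwa [fp_M] at h2
    have hvα : v < α := by
      rw [hveq2]
      exact hMcov gsL hgsLlt (hveq2 ▸ hvlt)
    have hαlt0 : α < lam0.ord := lt_of_lt_of_le hMhigh (Cardinal.ord_le_ord.mpr hble)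
    have hcard : α.card = iterSucc lam η := by
      apply le_antisymm
      · have h1 : α.card < iterSucc lam (η+1) := Cardinal.lt_ord.mp hMhigh
        rw [iterSucc_succ] at h1
        exact Order.lt_succ_iff.mp h1
      · have h2 := Ordinal.card_le_card hMlow
        rwa [Cardinal.card_ord] at h2
    have hu : binv α v < (iterSucc lam η).ord := by
      have h3 := binv_lt hvα
      rwa [hcard] at h3
    have huE : binv α v ∈ ESet (fp f lam lam0 kap0 es) X kap0 := by
      have h2 := hclosed [(2:Ordinal.{u}), α, v] (by
        intro x hx
        simp only [List.mem_cons, List.not_mem_nil, or_false] at hx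
        rcases hx with h | h | h
        · rw [h]; exact hIioE _ (lt_of_lt_of_le (by exact_mod_cast Ordinal.nat_lt_omega0 2) hωκ)
        · rw [h]; exact hXE α hαX
        · rw [h]; exact ⟨t, xs, gs, hxs, hgs, hveq⟩
      )
      rw [show [(2:Ordinal.{u}), α, v] = (2:Ordinal.{u}) :: α :: v :: [] from rfl,
        fp_binv, if_pos ⟨hvα, hαlt0⟩] at h2
      exact h2
    exact ⟨α, binv α v, ⟨hαX, hαlt0⟩, huE, hu, (unbinv_binv hvα).symm⟩
  have covC : kap0 < lam → ∀ v ∈ ESet (fp f lam lam0 kap0 es) X kap0, v < lam.ord →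
      ∃ δ L, (δ ∈ X ∧ δ < lam0.ord) ∧ (∀ x ∈ L, x < kap0.ord) ∧ v = es δ L := by
    intro hkl v hvE hvlt
    obtain ⟨t, xs, gs, hxs, hgs, hveq⟩ := hvE
    set xsL := (List.range (vb t)).map xs with hxsLdef
    set gsL := (List.range (pb t)).map gs with hgsLdef
    have hxsLX : ∀ x ∈ xsL, x ∈ X := by
      intro x hx
      rw [hxsLdef] at hx
      simp only [List.mem_map, List.mem_range] at hx
      obtain ⟨n, -, rfl⟩ := hx
      exact hxs n
    have hgsLlt : ∀ x ∈ gsL, x < kap0.ord := by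
      intro x hx
      rw [hgsLdef] at hx
      simp only [List.mem_map, List.mem_range] at hx
      obtain ⟨n, -, rfl⟩ := hx
      exact hgs n
    have hveq2 : v = (ev (Fst f lam lam0 kap0 es (tb t)) (fill xsL 0) (fill gsL 0) t).1 := by
      rw [hveq, hstable t xs gs]
    have hlpos : (0:Ordinal.{u}) < lam.ord := hκpos.trans_le (Cardinal.ord_le_ord.mpr hkl.le)
    obtain ⟨hδlt, hδcov⟩ := Cb_cov lam lam0 kap0 es (Fst f lam lam0 kap0 es (tb t))
      (hes hkl) hlpos hl0pos ((enc t : ℕ) : Ordinal.{u}) xsL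
    rw [show dec (toNatO ((enc t : ℕ) : Ordinal.{u})) = t by rw [toNatO_cast, dec_enc]] at hδcov
    have hδX : Cb lam lam0 kap0 es (Fst f lam lam0 kap0 es (tb t))
        ((enc t : ℕ) : Ordinal.{u}) xsL ∈ X := by
      have h2 := hX3 (((5 + tb t : ℕ) : Ordinal.{u}) :: (1:Ordinal.{u}) ::
          ((enc t : ℕ) : Ordinal.{u}) :: xsL) (by
        intro x hx
        simp only [List.mem_cons] at hx
        rcases hx with h | h | h | hx
        · rw [h]; exact hnat _
        · rw [h]; simpa using hnat 1
        · rw [h]; exact hnat _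
        · exact hxsLX x hx)
      rwa [fp_C] at h2
    refine ⟨_, gsL, ⟨hδX, hδlt⟩, hgsLlt, ?_⟩
    rw [hveq2]
    exact (hδcov gsL hgsLlt (hveq2 ▸ hvlt)).symm
  have hliftk : ℵ₀ ≤ Cardinal.lift.{u+1} kap0 := by
    rw [← Cardinal.lift_aleph0.{u+1, u}]
    exact Cardinal.lift_le.mpr hkap0
  have hcount : ∀ η : Ordinal.{u}, η ≤ ξ →
      #(ESet (fp f lam lam0 kap0 es) X kap0 ∩ Set.Iio ((iterSucc lam η).ord) : Set Ordinal.{u})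
        ≤ Cardinal.lift.{u+1} kap0 := by
    intro η
    induction η using Ordinal.induction with
    | _ η IH =>
    intro hηξ
    rcases Ordinal.zero_or_succ_or_isSuccLimit η with rfl | ⟨o, rfl⟩ | hlim
    · rw [iterSucc_zero]
      rcases hc with hc1 | ⟨hlt, hpow⟩
      · refine (Cardinal.mk_le_mk_of_subset Set.inter_subset_right).trans ?_
        rw [Ordinal.mk_Iio_ordinal, Cardinal.card_ord]
        exact Cardinal.lift_le.mpr hc1
      · have hsub : (ESet (fp f lam lam0 kap0 es) X kap0 ∩ Set.Iio lam.ord : Set Ordinal.{u}) ⊆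
            Set.image2 es (X ∩ Set.Iio lam0.ord)
              {L : List Ordinal.{u} | ∀ x ∈ L, x < kap0.ord} := by
          rintro v ⟨hvE, hvlt⟩
          obtain ⟨δ, L, ⟨hδX, hδlt⟩, hL, rfl⟩ := covC hlt v hvE hvlt
          exact Set.mem_image2_of_mem ⟨hδX, hδlt⟩ hL
        refine (Cardinal.mk_le_mk_of_subset hsub).trans ((mk_image2_le es _ _).trans ?_)
        rw [hX4]
        refine (mul_le_mul' le_rfl (mk_listSet_le kap0.ord)).trans ?_
        rw [Cardinal.card_ord, max_eq_right (by exact hliftk), Cardinal.mul_eq_self hliftk]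
    · have hsucc : Order.succ o = o + 1 := (Ordinal.add_one_eq_succ o).symm
      rw [hsucc] at hηξ ⊢
      have hoξ : o < ξ := lt_of_lt_of_le (lt_add_one o) hηξ
      by_cases hbig : kap0 < iterSucc lam (o+1)
      · have hsub : (ESet (fp f lam lam0 kap0 es) X kap0 ∩
              Set.Iio ((iterSucc lam (o+1)).ord) : Set Ordinal.{u}) ⊆
            Set.image2 unbinv (X ∩ Set.Iio lam0.ord)
              (ESet (fp f lam lam0 kap0 es) X kap0 ∩ Set.Iio ((iterSucc lam o).ord)) := by
          rintro v ⟨hvE, hvlt⟩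
          obtain ⟨α, u, ⟨hαX, hαlt⟩, huE, hult, rfl⟩ := covM o hoξ hbig _ hvE hvlt
          exact Set.mem_image2_of_mem ⟨hαX, hαlt⟩ ⟨huE, hult⟩
        refine (Cardinal.mk_le_mk_of_subset hsub).trans ((mk_image2_le _ _ _).trans ?_)
        rw [hX4]
        refine (mul_le_mul' le_rfl (IH o (Order.lt_succ_iff.mpr le_rfl)
          (hoξ.le))).trans ?_
        rw [Cardinal.mul_eq_self hliftk]
      · push_neg at hbig
        refine (Cardinal.mk_le_mk_of_subset Set.inter_subset_right).trans ?_
        rw [Ordinal.mk_Iio_ordinal, Cardinal.card_ord]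
        exact Cardinal.lift_le.mpr hbig
    · have hsub : (ESet (fp f lam lam0 kap0 es) X kap0 ∩
            Set.Iio ((iterSucc lam η).ord) : Set Ordinal.{u}) ⊆
          ⋃ (p : Set.Iio η), (ESet (fp f lam lam0 kap0 es) X kap0 ∩
            Set.Iio ((iterSucc lam p.1).ord)) := by
        rintro v ⟨hvE, hvlt⟩
        obtain ⟨η', hη', hv'⟩ := lt_iterSucc_limit lam hlim hvlt
        exact Set.mem_iUnion.mpr ⟨⟨η', hη'⟩, hvE, hv'⟩
      refine (Cardinal.mk_le_mk_of_subset hsub).trans ((Cardinal.mk_iUnion_le _).trans ?_)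
      haveI : Nonempty (Set.Iio η) := ⟨⟨0, hlim.pos⟩⟩
      have hfac1 : #(Set.Iio η) ≤ Cardinal.lift.{u+1} kap0 := by
        rw [Ordinal.mk_Iio_ordinal]
        refine Cardinal.lift_le.mpr ?_
        exact (Cardinal.lt_ord.mp (lt_of_le_of_lt hηξ hξ)).le
      have hfac2 : ⨆ (p : Set.Iio η), #(ESet (fp f lam lam0 kap0 es) X kap0 ∩
          Set.Iio ((iterSucc lam p.1).ord) : Set Ordinal.{u}) ≤ Cardinal.lift.{u+1} kap0 :=
        ciSup_le' (fun p => IH p.1 p.2 ((le_of_lt p.2).trans hηξ))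
      refine (mul_le_mul' hfac1 hfac2).trans ?_
      rw [Cardinal.mul_eq_self hliftk]
  refine ⟨ESet (fp f lam lam0 kap0 es) X kap0, ?_, ?_, ?_, ?_, ?_⟩
  · rintro v ⟨t, xs, gs, hxs, hgs, rfl⟩
    exact Set.mem_Iio.mpr (ev_lt hFPlt hl1
      (fun n => Set.mem_Iio.mp (hX1 (hxs n)))
      (fun n => lt_of_lt_of_le (hgs n)
        (Cardinal.ord_le_ord.mpr (hk0l0.trans hlam))) t).1
  · have hlift1 : ℵ₀ ≤ Cardinal.lift.{u+1} kap1 := hliftk.trans (Cardinal.lift_le.mpr hkap)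
    apply le_antisymm
    · have hsub : (ESet (fp f lam lam0 kap0 es) X kap0 : Set Ordinal.{u}) ⊆ Set.range
          (fun q : T × List (↥X) × List (Set.Iio kap0.ord) =>
            (ev (fp f lam lam0 kap0 es) (fill (q.2.1.map Subtype.val) 0)
              (fill (q.2.2.map Subtype.val) 0) q.1).1) := by
        rintro v ⟨t, xs, gs, hxs, hgs, rfl⟩
        have hxl : ∀ x ∈ (List.range (vb t)).map xs, x ∈ X := by
          intro x hx
          simp only [List.mem_map, List.mem_range] at hx
          obtain ⟨n, -, rfl⟩ := hx
          exact hxs n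
        have hgl : ∀ x ∈ (List.range (pb t)).map gs, x ∈ Set.Iio kap0.ord := by
          intro x hx
          simp only [List.mem_map, List.mem_range] at hx
          obtain ⟨n, -, rfl⟩ := hx
          exact hgs n
        refine ⟨⟨t, ((List.range (vb t)).map xs).pmap (fun x hx => (⟨x, hx⟩ : ↥X)) hxl,
          ((List.range (pb t)).map gs).pmap
            (fun x hx => (⟨x, hx⟩ : Set.Iio kap0.ord)) hgl⟩, ?_⟩
        dsimp only
        rw [pmap_val, pmap_val]
        exact congrArg Prod.fst (ev_depend (fp f lam lam0 kap0 es) t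
          (fun n hn => fill_range xs (vb t) n 0 hn)
          (fun n hn => fill_range gs (pb t) n 0 hn))
      refine (Cardinal.mk_le_mk_of_subset hsub).trans (Cardinal.mk_range_le.trans ?_)
      have hT : Cardinal.lift.{u+1, 0} #T ≤ ℵ₀ := by
        refine (Cardinal.lift_le.mpr (Cardinal.mk_le_aleph0 (α := T))).trans ?_
        simp
      have hLX : #(List (↥X)) ≤ Cardinal.lift.{u+1} kap1 := by
        refine (Cardinal.mk_list_le_max _).trans ?_
        rw [hX2]
        exact max_le hlift1 le_rfl
      have hLG : #(List (Set.Iio kap0.ord)) ≤ Cardinal.lift.{u+1} kap1 := by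
        refine (Cardinal.mk_list_le_max _).trans ?_
        rw [Ordinal.mk_Iio_ordinal, Cardinal.card_ord]
        exact max_le hlift1 ((Cardinal.lift_le.mpr hkap))
      calc #(T × List (↥X) × List (Set.Iio kap0.ord))
          = Cardinal.lift.{u+1, 0} #T * #(List (↥X) × List (Set.Iio kap0.ord)) := by
            rw [Cardinal.mk_prod]
            simp
        _ = Cardinal.lift.{u+1, 0} #T * (#(List (↥X)) * #(List (Set.Iio kap0.ord))) := by
            rw [Cardinal.mk_prod]
            simp
        _ ≤ ℵ₀ * (Cardinal.lift.{u+1} kap1 * Cardinal.lift.{u+1} kap1) :=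
            mul_le_mul' hT (mul_le_mul' hLX hLG)
        _ = ℵ₀ * Cardinal.lift.{u+1} kap1 := by rw [Cardinal.mul_eq_self hlift1]
        _ = Cardinal.lift.{u+1} kap1 := Cardinal.aleph0_mul_eq hlift1
    · rw [← hX2]
      exact Cardinal.mk_le_mk_of_subset (fun x hx => hXE x hx)
  · intro l hl
    have h2 := hclosed ((1:Ordinal.{u}) :: l) (by
      intro x hx
      simp only [List.mem_cons] at hx
      rcases hx with hh | hx
      · rw [hh]; exact hIioE _ (lt_of_lt_of_le (by exact_mod_cast Ordinal.nat_lt_omega0 1) hωκ)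
      · exact hl x hx)
    rwa [fp_f] at h2
  · apply le_antisymm
    · have h2 := hcount ξ le_rfl
      rwa [← heq] at h2
    · have hsub : Set.Iio kap0.ord ⊆
          (ESet (fp f lam lam0 kap0 es) X kap0 ∩ Set.Iio lam0.ord : Set Ordinal.{u}) := by
        intro γ hγ
        exact ⟨hIioE γ hγ, lt_of_lt_of_le hγ (Cardinal.ord_le_ord.mpr hk0l0)⟩
      have h3 := Cardinal.mk_le_mk_of_subset hsub
      rwa [Ordinal.mk_Iio_ordinal, Cardinal.card_ord] at h3
  · exact fun η hη => hIioE η hη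

end CXP

/-- Suppose either `λ0 = κ0^{+ξ}`, or there is `λ ≤ λ0` with `λ0 = λ^{+ξ}` and
`λ^{κ0} ≤ λ0`.  If `(λ1,λ0) ↠_ξ (κ1,κ0)`, then `(λ1,λ0) ↠_{κ0} (κ1,κ0)`. -/
theorem changXi_of_changXi (lam1 lam0 kap1 kap0 : Cardinal.{u}) (ξ : Ordinal.{u})
    (hlam0 : ℵ₀ ≤ lam0) (hkap0 : ℵ₀ ≤ kap0)
    (hlam : lam0 ≤ lam1) (hkap : kap0 ≤ kap1)
    (hcase : lam0 = iterSucc kap0 ξ ∨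
      ∃ lam : Cardinal.{u}, lam ≤ lam0 ∧ lam0 = iterSucc lam ξ ∧ lam ^ kap0 ≤ lam0)
    (h : ChangXi lam1 lam0 kap1 kap0 ξ) :
    ChangXi lam1 lam0 kap1 kap0 kap0.ord := by
  by_cases hord : kap0.ord ≤ ξ
  · intro f hf
    obtain ⟨X, h1, h2, h3, h4, h5⟩ := h f hf
    exact ⟨X, h1, h2, h3, h4, fun η hη => h5 η (lt_of_lt_of_le hη hord)⟩
  · push_neg at hord
    rcases hcase with hc1 | ⟨lam, hlle, heq, hpow⟩
    · exact CXP.changXi_main lam1 lam0 kap1 kap0 kap0 ξ hlam0 hkap0 hlam hkap hord hc1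
        (Or.inl le_rfl) h
    · by_cases hlk : lam ≤ kap0
      · exact CXP.changXi_main lam1 lam0 kap1 kap0 lam ξ hlam0 hkap0 hlam hkap hord heq
          (Or.inl hlk) h
      · exact CXP.changXi_main lam1 lam0 kap1 kap0 lam ξ hlam0 hkap0 hlam hkap hord heq
          (Or.inr ⟨not_le.mp hlk, hpow⟩) h
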